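/- Let A ∈ ℂ^{r×m} and B ∈ ℂ^{r×q} be matrices with r ≥ q+1, and let c > 0. Let B B^H = V D V^H be an eigendecomposition with V unitary, where D is diagonal with exactly q possibly-nonzero eigenvalues. Then A^H (cI_r + B B^H)^{-1} A ⪰ (1/c) Ā^H Ā, where Ā ∈ ℂ^{(r−q)×m} consists of the r−q rows of V^H A corresponding to zero eigenvalues of B B^H. -/

import Mathlib

open Matrix ComplexOrder

/-- For `A ∈ ℂ^{r×m}`, `B ∈ ℂ^{r×q}` with `r ≥ q+1` and `c > 0`: if
`BBᴴ = V D Vᴴ` with `V` unitary and `D` diagonal whose entries at the `r-q`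
indices picked out by `e` are zero, then
`Aᴴ(cI + BBᴴ)⁻¹A ⪰ (1/c) Āᴴ Ā` where `Ā` consists of the corresponding rows of `Vᴴ A`. -/
theorem quadratic_form_lower_bound {r m q : ℕ} (hr : q + 1 ≤ r) (c : ℝ) (hc : 0 < c)
    (A : Matrix (Fin r) (Fin m) ℂ) (B : Matrix (Fin r) (Fin q) ℂ)
    (V D : Matrix (Fin r) (Fin r) ℂ)
    (hV : V ∈ Matrix.unitaryGroup (Fin r) ℂ)
    (hD : D.IsDiag)
    (hBB : B * Bᴴ = V * D * Vᴴ)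
    (e : Fin (r - q) ↪ Fin r)
    (hzero : ∀ i, D (e i) (e i) = 0)
    (Abar : Matrix (Fin (r - q)) (Fin m) ℂ)
    (hAbar : ∀ i j, Abar i j = (Vᴴ * A) (e i) j) :
    (Aᴴ * ((c : ℂ) • (1 : Matrix (Fin r) (Fin r) ℂ) + B * Bᴴ)⁻¹ * A
      - ((1 / c : ℝ) : ℂ) • (Abarᴴ * Abar)).PosSemidef := by
  classical
  have hVV' : V * Vᴴ = 1 := by
    simpa [Matrix.star_eq_conjTranspose] using (Matrix.mem_unitaryGroup_iff.mp hV)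
  have hV'V : Vᴴ * V = 1 := by
    simpa [Matrix.star_eq_conjTranspose] using (Matrix.mem_unitaryGroup_iff'.mp hV)
  -- D is PSD
  have hDps : D.PosSemidef := by
    have : D = Vᴴ * (B * Bᴴ) * (Vᴴ)ᴴ := by
      rw [hBB, conjTranspose_conjTranspose]
      calc D = (Vᴴ * V) * D * (Vᴴ * V) := by rw [hV'V]; simp
        _ = Vᴴ * (V * D * Vᴴ) * V := by simp only [Matrix.mul_assoc]
    rw [this]
    exact (Matrix.posSemidef_self_mul_conjTranspose B).mul_mul_conjTranspose_same Vᴴ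
  set d : Fin r → ℂ := fun i => D i i with hd
  have hdnn : ∀ i, 0 ≤ d i := fun i => by
    have := hDps.dotProduct_mulVec_nonneg (Pi.single i 1)
    simpa [dotProduct, Pi.single_apply, hd] using this
  have hdre : ∀ i, d i = (((d i).re : ℝ) : ℂ) ∧ 0 ≤ (d i).re := by
    intro i
    have h := hdnn i
    rw [Complex.le_def] at h
    refine ⟨Complex.ext ?_ ?_, h.1⟩ <;> simp [← h.2]
  set f : Fin r → ℂ := fun i => (c : ℂ) + d i with hf
  have hfre : ∀ i, f i = (((c + (d i).re : ℝ)) : ℂ) := by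
    intro i
    rw [hf]
    push_cast
    rw [← (hdre i).1]
  have hfpos : ∀ i, (0:ℝ) < c + (d i).re := fun i => by
    have := (hdre i).2; linarith
  have hne : ∀ i, f i ≠ 0 := by
    intro i h
    rw [hfre i] at h
    exact_mod_cast (hfpos i).ne' (by exact_mod_cast h)
  set g : Fin r → ℂ := fun i => (f i)⁻¹ with hg
  have hDdiag : Matrix.diagonal d = D := hD.diagonal_diag
  have hsum : (c : ℂ) • (1 : Matrix (Fin r) (Fin r) ℂ) + B * Bᴴ
      = V * Matrix.diagonal f * Vᴴ := by
    have : Matrix.diagonal f = (c : ℂ) • (1 : Matrix (Fin r) (Fin r) ℂ) + D := by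
      rw [Matrix.smul_one_eq_diagonal, ← hDdiag, Matrix.diagonal_add]
    rw [hBB, this, Matrix.mul_add, Matrix.add_mul]
    congr 1
    rw [Matrix.mul_smul, Matrix.mul_one, Matrix.smul_mul, hVV']
  have hinv : ((c : ℂ) • (1 : Matrix (Fin r) (Fin r) ℂ) + B * Bᴴ)⁻¹
      = V * Matrix.diagonal g * Vᴴ := by
    apply Matrix.inv_eq_right_inv
    rw [hsum]
    calc V * Matrix.diagonal f * Vᴴ * (V * Matrix.diagonal g * Vᴴ)
        = V * (Matrix.diagonal f * (Vᴴ * V) * Matrix.diagonal g) * Vᴴ := by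
          simp only [Matrix.mul_assoc]
      _ = V * (Matrix.diagonal f * Matrix.diagonal g) * Vᴴ := by rw [hV'V]; simp
      _ = V * Vᴴ := by
          rw [Matrix.diagonal_mul_diagonal]
          have : (fun i => f i * g i) = fun _ => (1:ℂ) := by
            funext i; exact mul_inv_cancel₀ (hne i)
          rw [this, Matrix.diagonal_one, Matrix.mul_one]
      _ = 1 := hVV'
  set M : Matrix (Fin r) (Fin m) ℂ := Vᴴ * A with hM
  have hlhs : Aᴴ * ((c : ℂ) • (1 : Matrix (Fin r) (Fin r) ℂ) + B * Bᴴ)⁻¹ * A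
      = Mᴴ * Matrix.diagonal g * M := by
    rw [hinv, hM, Matrix.conjTranspose_mul, Matrix.conjTranspose_conjTranspose]
    simp only [Matrix.mul_assoc]
  set p : Fin r → ℂ := fun i => if ∃ i', e i' = i then ((1 / c : ℝ) : ℂ) else 0 with hp
  have hrhs : ((1 / c : ℝ) : ℂ) • (Abarᴴ * Abar) = Mᴴ * Matrix.diagonal p * M := by
    rw [Matrix.mul_assoc]
    ext j k
    have R : (Mᴴ * (Matrix.diagonal p * M)) j k
        = ∑ x, star (M x j) * (p x * M x k) := by
      rw [Matrix.mul_apply]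
      refine Finset.sum_congr rfl fun x _ => ?_
      rw [Matrix.conjTranspose_apply, Matrix.diagonal_mul]
    have L : (((1 / c : ℝ) : ℂ) • (Abarᴴ * Abar)) j k
        = ∑ i', ((1 / c : ℝ) : ℂ) * (star (Abar i' j) * Abar i' k) := by
      rw [Matrix.smul_apply, Matrix.mul_apply, smul_eq_mul, Finset.mul_sum]
      exact Finset.sum_congr rfl fun i' _ => by rw [Matrix.conjTranspose_apply]
    rw [L, R]
    have step2 : ∀ i ∈ Finset.univ, i ∉ Finset.univ.map e →
        star (M i j) * (p i * M i k) = 0 := by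
      intro i _ hi
      have hni : ¬ ∃ i', e i' = i := by
        intro h
        obtain ⟨i', hi'⟩ := h
        exact hi (Finset.mem_map.mpr ⟨i', Finset.mem_univ _, hi'⟩)
      rw [show p i = 0 from if_neg hni, zero_mul, mul_zero]
    rw [← Finset.sum_subset (Finset.subset_univ _) step2, Finset.sum_map]
    refine Finset.sum_congr rfl fun i' _ => ?_
    have hpe : p (e i') = ((1 / c : ℝ) : ℂ) := if_pos ⟨i', rfl⟩
    rw [hpe, hAbar i' j, hAbar i' k]
    ring
  have key : Aᴴ * ((c : ℂ) • (1 : Matrix (Fin r) (Fin r) ℂ) + B * Bᴴ)⁻¹ * A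
      - ((1 / c : ℝ) : ℂ) • (Abarᴴ * Abar)
      = Mᴴ * Matrix.diagonal (fun i => g i - p i) * M := by
    rw [hlhs, hrhs, ← Matrix.diagonal_sub, Matrix.mul_sub, Matrix.sub_mul]
  rw [key]
  refine (Matrix.posSemidef_diagonal_iff.mpr ?_).conjTranspose_mul_mul_same M
  intro i
  by_cases h : ∃ i', e i' = i
  · obtain ⟨i', rfl⟩ := h
    have hd0 : d (e i') = 0 := hzero i'
    have : g (e i') = ((1 / c : ℝ) : ℂ) := by
      rw [hg]; simp only [hf, hd0, add_zero]
      push_cast; rw [one_div]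
    rw [this, hp]
    simp
  · have hp0 : p i = 0 := by rw [hp]; simp [h]
    rw [hp0, sub_zero, hg]
    simp only
    rw [hfre i, ← Complex.ofReal_inv]
    exact_mod_cast inv_nonneg.mpr (hfpos i).le
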